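/- An ideal (projective, Lüders-rule) nonselective measurement in the twisted basis {|00⟩, |01⟩, |1+⟩, |1-⟩} allows signaling: starting from |00⟩, if Alice applies σ_x to the first qubit before the twisted measurement, then Bob's subsequent Z-measurement statistics on the second qubit differ from the case where Alice does nothing. Specifically, with no kick, Bob obtains outcome 0 with probability 1; with the kick σ_x ⊗ I, Bob obtains outcome 0 with probability 1/2. -/

import Mathlib

open Matrix
open scoped Kronecker BigOperators ComplexOrder

noncomputable section

/-- Hermitian inner product (conjugate-linear in the first argument). -/
def dot {I : Type*} [Fintype I] (v w : I → ℂ) : ℂ := ∑ i, star (v i) * w i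

/-- Outer product |v⟩⟨v|. -/
def outer {I : Type*} (v : I → ℂ) : Matrix I I ℂ := fun i j => v i * star (v j)

def ket0 : Fin 2 → ℂ := fun i => if i = 0 then 1 else 0
def ket1 : Fin 2 → ℂ := fun i => if i = 1 then 1 else 0

/-- 1/√2 as a complex number. -/
def isq2 : ℂ := ((Real.sqrt 2)⁻¹ : ℝ)

def ketP : Fin 2 → ℂ := fun _ => isq2
def ketM : Fin 2 → ℂ := fun i => if i = 0 then isq2 else -isq2

/-- Tensor product of two qubit state vectors. -/
def tp (v w : Fin 2 → ℂ) : Fin 2 × Fin 2 → ℂ := fun p => v p.1 * w p.2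

/-- Partial trace over the first (Alice's) qubit; result acts on Bob's qubit. -/
def ptrA (ρ : Matrix (Fin 2 × Fin 2) (Fin 2 × Fin 2) ℂ) : Matrix (Fin 2) (Fin 2) ℂ :=
  fun b b' => ∑ a, ρ (a, b) (a, b')

/-- Partial trace over the second (Bob's) qubit; result acts on Alice's qubit. -/
def ptrB (ρ : Matrix (Fin 2 × Fin 2) (Fin 2 × Fin 2) ℂ) : Matrix (Fin 2) (Fin 2) ℂ :=
  fun a a' => ∑ b, ρ (a, b) (a', b)

/-- Nonselective ideal (Lüders) measurement channel in the orthonormal basis `e`. -/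
def measChan (e : Fin 4 → (Fin 2 × Fin 2 → ℂ))
    (ρ : Matrix (Fin 2 × Fin 2) (Fin 2 × Fin 2) ℂ) : Matrix (Fin 2 × Fin 2) (Fin 2 × Fin 2) ℂ :=
  ∑ i, outer (e i) * ρ * outer (e i)

/-- Pauli matrices. -/
def sx : Matrix (Fin 2) (Fin 2) ℂ := !![0, 1; 1, 0]
def sy : Matrix (Fin 2) (Fin 2) ℂ := !![0, -Complex.I; Complex.I, 0]
def sz : Matrix (Fin 2) (Fin 2) ℂ := !![1, 0; 0, -1]

def pauli : Fin 4 → Matrix (Fin 2) (Fin 2) ℂ := ![1, sx, sy, sz]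

/-- The Bell state Φ⁺ = (|00⟩+|11⟩)/√2. -/
def phiP : Fin 2 × Fin 2 → ℂ := fun p => if p.1 = p.2 then isq2 else 0

/-- Bell basis parametrized by Pauli operators: `bellP k = (I ⊗ σ_k) Φ⁺`. -/
def bellP (k : Fin 4) : Fin 2 × Fin 2 → ℂ := fun p => isq2 * pauli k p.2 p.1

/-- Explicit Bell basis in the order Φ⁺, Ψ⁺, Ψ⁻, Φ⁻. -/
def bPhiP : Fin 2 × Fin 2 → ℂ := fun p => if p.1 = p.2 then isq2 else 0
def bPhiM : Fin 2 × Fin 2 → ℂ := fun p => if p.1 = p.2 then (if p.1 = 0 then isq2 else -isq2) else 0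
def bPsiP : Fin 2 × Fin 2 → ℂ := fun p => if p.1 = p.2 then 0 else isq2
def bPsiM : Fin 2 × Fin 2 → ℂ := fun p => if p.1 = p.2 then 0 else (if p.1 = 0 then isq2 else -isq2)

def bellE : Fin 4 → (Fin 2 × Fin 2 → ℂ) := ![bPhiP, bPsiP, bPsiM, bPhiM]

/-- The twisted basis {|00⟩, |01⟩, |1+⟩, |1-⟩}. -/
def twisted : Fin 4 → (Fin 2 × Fin 2 → ℂ) := ![tp ket0 ket0, tp ket0 ket1, tp ket1 ketP, tp ket1 ketM]

lemma isq2_sq : isq2 * isq2 = 1/2 := by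
  unfold isq2
  rw [← Complex.ofReal_mul]
  rw [← Real.sqrt_inv]
  rw [Real.mul_self_sqrt (by norm_num)]
  norm_num

lemma star_isq2 : star isq2 = isq2 := by
  unfold isq2; exact Complex.conj_ofReal _

/-- the nonselective ideal measurement in the twisted basis allows signaling:
starting from |00⟩, without Alice's kick Bob's Z-outcome 0 has probability 1; with the kick
σ_x ⊗ I it has probability 1/2, so Bob's marginal changes. -/
theorem twisted_ideal_measurement_signals :
    ptrA (measChan twisted (outer (tp ket0 ket0))) 0 0 = 1 ∧
    ptrA (measChan twisted
      ((sx ⊗ₖ (1 : Matrix (Fin 2) (Fin 2) ℂ)) * outer (tp ket0 ket0) *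
        (sx ⊗ₖ (1 : Matrix (Fin 2) (Fin 2) ℂ))ᴴ)) 0 0 = 1 / 2 ∧
    ptrA (measChan twisted
      ((sx ⊗ₖ (1 : Matrix (Fin 2) (Fin 2) ℂ)) * outer (tp ket0 ket0) *
        (sx ⊗ₖ (1 : Matrix (Fin 2) (Fin 2) ℂ))ᴴ)) ≠
      ptrA (measChan twisted (outer (tp ket0 ket0))) := by
  have h1 : ptrA (measChan twisted (outer (tp ket0 ket0))) 0 0 = 1 := by
    simp only [ptrA, measChan, twisted, tp, ket0, ket1, ketP, ketM, outer,
      Matrix.sum_apply, Matrix.mul_apply, Fin.sum_univ_four, Fintype.sum_prod_type,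
      Fin.sum_univ_two, Matrix.cons_val_zero, Matrix.cons_val_one, Matrix.head_cons,
      Matrix.cons_val_fin_one, star_isq2, star_zero, star_one, star_neg, star_mul']
    norm_num [tp, ket0, ket1, ketP, ketM, isq2_sq, star_isq2, Matrix.cons_val_two, Matrix.cons_val_three, Matrix.vecHead, Matrix.vecTail, Function.comp, mul_assoc, mul_comm, mul_left_comm]
  have h2 : ptrA (measChan twisted
      ((sx ⊗ₖ (1 : Matrix (Fin 2) (Fin 2) ℂ)) * outer (tp ket0 ket0) *
        (sx ⊗ₖ (1 : Matrix (Fin 2) (Fin 2) ℂ))ᴴ)) 0 0 = 1 / 2 := by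
    simp only [ptrA, measChan, twisted, tp, ket0, ket1, ketP, ketM, outer, sx,
      Matrix.sum_apply, Matrix.mul_apply, Matrix.conjTranspose_apply,
      Matrix.kroneckerMap_apply, Matrix.one_apply, Fin.sum_univ_four,
      Fintype.sum_prod_type, Fin.sum_univ_two, Prod.fst_zero, Prod.snd_zero, Matrix.cons_val_zero,
      Matrix.cons_val_one, Matrix.head_cons, Matrix.cons_val_fin_one,
      star_isq2, star_zero, star_one, star_neg, star_mul']
    norm_num [tp, ket0, ket1, ketP, ketM, isq2_sq, star_isq2, Matrix.cons_val_two, Matrix.cons_val_three, Matrix.vecHead, Matrix.vecTail, Function.comp, mul_assoc, mul_comm, mul_left_comm]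
  refine ⟨h1, h2, fun h => ?_⟩
  have := congrFun (congrFun h 0) 0
  rw [h1, h2] at this
  norm_num at this
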